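/- arXiv:0709.4332 — 3 statements merged into one kernel-verified Lean document; each statement's English description precedes it below -/
import Mathlib

section
/- Let 0 < ε < ε₁, let I = [A,B] be a nondegenerate bounded interval, and let φ ∈ BMO_ε(I). Then there exists c ∈ (A,B) such that, writing I₋ = [A,c], I₊ = [c,B], and x^± = (⟨φ⟩_{I_±}, ⟨φ²⟩_{I_±}), the entire straight-line segment with endpoints x⁻ and x⁺ lies in Ω_{ε₁}, and moreover min(|I₋|, |I₊|)/|I| ≥ min(1/2, √(1 − (ε/ε₁)²)), a bound independent of φ and I. -/
set_option maxHeartbeats 1000000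

open MeasureTheory Real

/-- The average of `φ` over the interval with endpoints `a`, `b`. -/
noncomputable def avg (φ : ℝ → ℝ) (a b : ℝ) : ℝ := (∫ t in a..b, φ t) / (b - a)

/-- `φ ∈ BMO_ε([a,b])`: `φ` and `φ²` are integrable on `[a,b]` and the mean
oscillation `⟨φ²⟩_J − ⟨φ⟩_J²` is at most `ε²` on every nondegenerate
subinterval `J = [c,d] ⊆ [a,b]`. -/
def BMOe (ε a b : ℝ) (φ : ℝ → ℝ) : Prop :=
  IntervalIntegrable φ volume a b ∧
  IntervalIntegrable (fun t => (φ t) ^ 2) volume a b ∧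
  ∀ c d : ℝ, a ≤ c → c < d → d ≤ b →
    avg (fun t => (φ t) ^ 2) c d - (avg φ c d) ^ 2 ≤ ε ^ 2
/-- The parabolic strip `Ω_ε = {x : x₁² ≤ x₂ ≤ x₁² + ε²}`. -/
def Omega (ε : ℝ) : Set (ℝ × ℝ) := {x | x.1 ^ 2 ≤ x.2 ∧ x.2 ≤ x.1 ^ 2 + ε ^ 2}

/-- The upper Bellman function `B⁺_δ`. -/
noncomputable def Bp (δ : ℝ) (x : ℝ × ℝ) : ℝ :=
  (1 - Real.sqrt (δ ^ 2 + x.1 ^ 2 - x.2)) / (1 - δ) *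
    Real.exp (x.1 + Real.sqrt (δ ^ 2 + x.1 ^ 2 - x.2) - δ)

/-- The lower Bellman function `B⁻_δ`. -/
noncomputable def Bm (δ : ℝ) (x : ℝ × ℝ) : ℝ :=
  (1 + Real.sqrt (δ ^ 2 + x.1 ^ 2 - x.2)) / (1 + δ) *
    Real.exp (x.1 - Real.sqrt (δ ^ 2 + x.1 ^ 2 - x.2) + δ)

lemma var_nonneg (φ : ℝ → ℝ) {u v : ℝ} (huv : u < v)
    (h1 : IntervalIntegrable φ volume u v)
    (h2 : IntervalIntegrable (fun t => (φ t) ^ 2) volume u v) :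
    (avg φ u v) ^ 2 ≤ avg (fun t => (φ t) ^ 2) u v := by
  set a := avg φ u v with ha
  have hvu : (0:ℝ) < v - u := by linarith
  have hIφ : ∫ t in u..v, φ t = a * (v - u) := by
    rw [ha, avg]; field_simp
  have e0 : 0 ≤ ∫ t in u..v, (φ t - a) ^ 2 :=
    intervalIntegral.integral_nonneg huv.le (fun t _ => sq_nonneg _)
  have hrw : (fun t => (φ t - a) ^ 2) = fun t => ((φ t) ^ 2 - (2*a) * φ t) + a ^ 2 := by
    funext t; ring
  rw [hrw] at e0
  rw [intervalIntegral.integral_add (h2.sub (h1.const_mul _)) intervalIntegrable_const,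
      intervalIntegral.integral_sub h2 (h1.const_mul _),
      intervalIntegral.integral_const_mul, intervalIntegral.integral_const, hIφ] at e0
  have hI2 : ∫ t in u..v, (φ t) ^ 2 = (avg (fun t => (φ t) ^ 2) u v) * (v - u) := by
    rw [avg]; field_simp
  rw [hI2, smul_eq_mul] at e0
  nlinarith [e0, hvu]

lemma chord_bound {σ τ a b p q ε ε₁ : ℝ} (hσ : 0 < σ) (hτ : 0 < τ)
    (hvar : (σ+τ)*σ*(ε₁^2-p^2) + (σ+τ)*τ*(ε₁^2-q^2) + σ*τ*(b-a)^2 ≤ (σ+τ)^2*ε^2)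
    (hg : (σ*p - τ*q)^2 ≤ (σ+τ)^2*(ε₁^2-ε^2)) :
    (b-a)^2 ≤ (p+q)^2 := by
  nlinarith [mul_pos hσ hτ, hvar, hg]

lemma point_in_omega {a b P Q p q ε₁ t : ℝ} (ht0 : 0 ≤ t) (ht1 : t ≤ 1)
    (hdm0 : 0 ≤ P - a^2) (hdp0 : 0 ≤ Q - b^2)
    (hp2 : P - a^2 = ε₁^2 - p^2) (hq2 : Q - b^2 = ε₁^2 - q^2)
    (hba : (b-a)^2 ≤ (p+q)^2) :
    ((1-t)*a + t*b)^2 ≤ (1-t)*P + t*Q ∧ (1-t)*P + t*Q ≤ ((1-t)*a + t*b)^2 + ε₁^2 := by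
  constructor
  · nlinarith [mul_nonneg (mul_nonneg ht0 (by linarith : (0:ℝ) ≤ 1 - t)) (sq_nonneg (b - a)),
      mul_nonneg (by linarith : (0:ℝ) ≤ 1 - t) hdm0, mul_nonneg ht0 hdp0]
  · nlinarith [mul_nonneg (mul_nonneg ht0 (by linarith : (0:ℝ) ≤ 1 - t)) (sub_nonneg.mpr hba),
      sq_nonneg ((1 - t) * p - t * q)]


/-- The splitting lemma: any interval carrying a `BMO_ε` function can be split
in two so that the segment between the Bellman points of the halves stays in
`Ω_{ε₁}`, with splitting ratio uniformly separated from `0` and `1`. -/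
theorem stmt11 (ε ε₁ : ℝ) (hε : 0 < ε) (hεε : ε < ε₁) (A B : ℝ) (hAB : A < B)
    (φ : ℝ → ℝ) (hφ : BMOe ε A B φ) :
    ∃ c ∈ Set.Ioo A B,
      segment ℝ (avg φ A c, avg (fun t => (φ t) ^ 2) A c)
          (avg φ c B, avg (fun t => (φ t) ^ 2) c B) ⊆ Omega ε₁ ∧
      min (1 / 2) (Real.sqrt (1 - (ε / ε₁) ^ 2)) ≤ min (c - A) (B - c) / (B - A) := by
  obtain ⟨hi1, hi2, hosc⟩ := hφ
  have hε₁ : 0 < ε₁ := hε.trans hεε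
  have hL : 0 < B - A := sub_pos.mpr hAB
  have hd2 : 0 < ε₁ ^ 2 - ε ^ 2 := by nlinarith
  set δ := Real.sqrt (ε₁ ^ 2 - ε ^ 2) with hδdef
  have hδsq : δ ^ 2 = ε₁ ^ 2 - ε ^ 2 := Real.sq_sqrt hd2.le
  have hδ0 : 0 < δ := Real.sqrt_pos.mpr hd2
  have hδε₁ : δ ≤ ε₁ := by nlinarith
  have hsq : Real.sqrt (1 - (ε / ε₁) ^ 2) = δ / ε₁ := by
    rw [show 1 - (ε / ε₁) ^ 2 = (δ / ε₁) ^ 2 by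
      field_simp
      nlinarith [hδsq]]
    exact Real.sqrt_sq (by positivity)
  set r := min (1 / 2 : ℝ) (Real.sqrt (1 - (ε / ε₁) ^ 2)) with hrdef
  have hr0 : 0 < r := lt_min (by norm_num) (by rw [hsq]; positivity)
  have hrhalf : r ≤ 1 / 2 := min_le_left _ _
  have hK : r * ε₁ ≤ (2 - r) * δ := by
    rcases le_total (Real.sqrt (1 - (ε / ε₁) ^ 2)) (1 / 2) with h | h
    · have hre : r = δ / ε₁ := by rw [hrdef, min_eq_right h, hsq]
      have hr1 : r ≤ 1 := by linarith
      rw [hre, div_mul_cancel₀ _ (ne_of_gt hε₁)]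
      nlinarith [hδ0, hr1, hre]
    · have hre : r = 1 / 2 := by rw [hrdef, min_eq_left h]
      have h2δ : ε₁ ≤ 2 * δ := by
        rw [hsq] at h
        have := (div_le_div_iff₀ (by norm_num) hε₁).mp h
        linarith
      rw [hre]; nlinarith
  -- split points
  set cm := A + r * (B - A) with hcmdef
  set cp := B - r * (B - A) with hcpdef
  have hAcm : A < cm := by nlinarith
  have hcmcp : cm ≤ cp := by nlinarith
  have hcpB : cp < B := by nlinarith
  have hcmB : cm < B := lt_of_le_of_lt hcmcp hcpB
  have hAcp : A < cp := lt_of_lt_of_le hAcm hcmcp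
  -- the defect functions
  set F : ℝ → ℝ := fun c => avg (fun t => (φ t) ^ 2) A c - (avg φ A c) ^ 2 with hFdef
  set G : ℝ → ℝ := fun c => avg (fun t => (φ t) ^ 2) c B - (avg φ c B) ^ 2 with hGdef
  set p : ℝ → ℝ := fun c => Real.sqrt (ε₁ ^ 2 - F c) with hpdef
  set q : ℝ → ℝ := fun c => Real.sqrt (ε₁ ^ 2 - G c) with hqdef
  set g : ℝ → ℝ := fun c => (c - A) * p c - (B - c) * q c with hgdef
  have hsubint : ∀ c d : ℝ, A ≤ c → c ≤ d → d ≤ B →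
      IntervalIntegrable φ volume c d ∧ IntervalIntegrable (fun t => (φ t) ^ 2) volume c d := by
    intro c d h1 h2 h3
    have hsub : Set.uIcc c d ⊆ Set.uIcc A B := by
      rw [Set.uIcc_of_le hAB.le, Set.uIcc_of_le h2]
      exact Set.Icc_subset_Icc h1 h3
    exact ⟨hi1.mono_set hsub, hi2.mono_set hsub⟩
  have hFb : ∀ c, A < c → c ≤ B → 0 ≤ F c ∧ F c ≤ ε ^ 2 := by
    intro c h1 h2
    obtain ⟨j1, j2⟩ := hsubint A c le_rfl h1.le h2
    exact ⟨sub_nonneg.mpr (var_nonneg φ h1 j1 j2), hosc A c le_rfl h1 h2⟩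
  have hGb : ∀ c, A ≤ c → c < B → 0 ≤ G c ∧ G c ≤ ε ^ 2 := by
    intro c h1 h2
    obtain ⟨j1, j2⟩ := hsubint c B h1 h2.le le_rfl
    exact ⟨sub_nonneg.mpr (var_nonneg φ h2 j1 j2), hosc c B h1 h2 le_rfl⟩
  have hpb : ∀ c, A < c → c ≤ B → δ ≤ p c ∧ p c ≤ ε₁ ∧ (p c) ^ 2 = ε₁ ^ 2 - F c := by
    intro c h1 h2
    obtain ⟨j1, j2⟩ := hFb c h1 h2
    refine ⟨?_, ?_, Real.sq_sqrt (by linarith)⟩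
    · rw [show δ = Real.sqrt (δ ^ 2) from (Real.sqrt_sq hδ0.le).symm]
      exact Real.sqrt_le_sqrt (by linarith)
    · rw [show ε₁ = Real.sqrt (ε₁ ^ 2) from (Real.sqrt_sq hε₁.le).symm]
      exact Real.sqrt_le_sqrt (by linarith)
  have hqb : ∀ c, A ≤ c → c < B → δ ≤ q c ∧ q c ≤ ε₁ ∧ (q c) ^ 2 = ε₁ ^ 2 - G c := by
    intro c h1 h2
    obtain ⟨j1, j2⟩ := hGb c h1 h2
    refine ⟨?_, ?_, Real.sq_sqrt (by linarith)⟩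
    · rw [show δ = Real.sqrt (δ ^ 2) from (Real.sqrt_sq hδ0.le).symm]
      exact Real.sqrt_le_sqrt (by linarith)
    · rw [show ε₁ = Real.sqrt (ε₁ ^ 2) from (Real.sqrt_sq hε₁.le).symm]
      exact Real.sqrt_le_sqrt (by linarith)
  -- continuity of g on [cm, cp]
  have hiOn1 : IntegrableOn φ (Set.uIcc A B) volume := (intervalIntegrable_iff').mp hi1
  have hiOn2 : IntegrableOn (fun t => (φ t) ^ 2) (Set.uIcc A B) volume := (intervalIntegrable_iff').mp hi2
  have hsubset : Set.Icc cm cp ⊆ Set.uIcc A B := by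
    rw [Set.uIcc_of_le hAB.le]
    exact Set.Icc_subset_Icc hAcm.le hcpB.le
  have cavg1 : ContinuousOn (fun c => avg φ A c) (Set.Icc cm cp) := by
    simp only [avg]
    exact ((intervalIntegral.continuousOn_primitive_interval hiOn1).mono hsubset).div
      ((continuous_id.sub continuous_const).continuousOn)
      (fun x hx => ne_of_gt (sub_pos.mpr (lt_of_lt_of_le hAcm hx.1)))
  have cavg2 : ContinuousOn (fun c => avg (fun t => (φ t) ^ 2) A c) (Set.Icc cm cp) := by
    simp only [avg]
    exact ((intervalIntegral.continuousOn_primitive_interval hiOn2).mono hsubset).div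
      ((continuous_id.sub continuous_const).continuousOn)
      (fun x hx => ne_of_gt (sub_pos.mpr (lt_of_lt_of_le hAcm hx.1)))
  have cavg3 : ContinuousOn (fun c => avg φ c B) (Set.Icc cm cp) := by
    simp only [avg]
    exact ((intervalIntegral.continuousOn_primitive_interval_left hiOn1).mono hsubset).div
      ((continuous_const.sub continuous_id).continuousOn)
      (fun x hx => ne_of_gt (sub_pos.mpr (lt_of_le_of_lt hx.2 hcpB)))
  have cavg4 : ContinuousOn (fun c => avg (fun t => (φ t) ^ 2) c B) (Set.Icc cm cp) := by
    simp only [avg]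
    exact ((intervalIntegral.continuousOn_primitive_interval_left hiOn2).mono hsubset).div
      ((continuous_const.sub continuous_id).continuousOn)
      (fun x hx => ne_of_gt (sub_pos.mpr (lt_of_le_of_lt hx.2 hcpB)))
  have cg : ContinuousOn g (Set.Icc cm cp) := by
    apply ContinuousOn.sub
    · exact ((continuous_id.sub continuous_const).continuousOn).mul
        (Real.continuous_sqrt.comp_continuousOn
          (continuousOn_const.sub (cavg2.sub (cavg1.pow 2))))
    · exact ((continuous_const.sub continuous_id).continuousOn).mul
        (Real.continuous_sqrt.comp_continuousOn
          (continuousOn_const.sub (cavg4.sub (cavg3.pow 2))))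
  -- endpoint bounds on g
  have hgcm : g cm ≤ (B - A) * δ := by
    obtain ⟨_, hple, _⟩ := hpb cm hAcm hcmB.le
    obtain ⟨hqge, _, _⟩ := hqb cm hAcm.le hcmB
    have e1 : cm - A = r * (B - A) := by rw [hcmdef]; ring
    have e2 : B - cm = (1 - r) * (B - A) := by rw [hcmdef]; ring
    rw [hgdef]
    simp only
    rw [e1, e2]
    have h1 : r * (B - A) * p cm ≤ r * (B - A) * ε₁ :=
      mul_le_mul_of_nonneg_left hple (by positivity)
    have h2 : (1 - r) * (B - A) * δ ≤ (1 - r) * (B - A) * q cm :=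
      mul_le_mul_of_nonneg_left hqge (by nlinarith)
    nlinarith [hK, hL]
  have hgcp : -((B - A) * δ) ≤ g cp := by
    obtain ⟨hpge, _, _⟩ := hpb cp hAcp hcpB.le
    obtain ⟨_, hqle, _⟩ := hqb cp hAcp.le hcpB
    have e1 : cp - A = (1 - r) * (B - A) := by rw [hcpdef]; ring
    have e2 : B - cp = r * (B - A) := by rw [hcpdef]; ring
    rw [hgdef]
    simp only
    rw [e1, e2]
    have h1 : (1 - r) * (B - A) * δ ≤ (1 - r) * (B - A) * p cp :=
      mul_le_mul_of_nonneg_left hpge (by nlinarith)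
    have h2 : r * (B - A) * q cp ≤ r * (B - A) * ε₁ :=
      mul_le_mul_of_nonneg_left hqle (by positivity)
    nlinarith [hK, hL]
  -- choose c
  have exC : ∃ c ∈ Set.Icc cm cp, -((B - A) * δ) ≤ g c ∧ g c ≤ (B - A) * δ := by
    by_cases hcase : -((B - A) * δ) ≤ g cm
    · exact ⟨cm, ⟨le_rfl, hcmcp⟩, hcase, hgcm⟩
    · have h1 : g cm ≤ -((B - A) * δ) := (not_le.mp hcase).le
      obtain ⟨c, hc, hgc⟩ := intermediate_value_Icc hcmcp cg ⟨h1, hgcp⟩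
      exact ⟨c, hc, by rw [hgc], by rw [hgc]; nlinarith⟩
  obtain ⟨c, ⟨hccm, hccp⟩, hg1, hg2⟩ := exC
  have hAc : A < c := lt_of_lt_of_le hAcm hccm
  have hcB : c < B := lt_of_le_of_lt hccp hcpB
  refine ⟨c, ⟨hAc, hcB⟩, ?_, ?_⟩
  · -- segment ⊆ Omega ε₁
    set a := avg φ A c with hadef
    set b := avg φ c B with hbdef
    set P := avg (fun t => (φ t) ^ 2) A c with hPdef
    set Q := avg (fun t => (φ t) ^ 2) c B with hQdef
    obtain ⟨hdm0, hdm1⟩ := hFb c hAc hcB.le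
    obtain ⟨hdp0, hdp1⟩ := hGb c hAc.le hcB
    obtain ⟨hpδ, hpε, hp2⟩ := hpb c hAc hcB.le
    obtain ⟨hqδ, hqε, hq2⟩ := hqb c hAc.le hcB
    have hFc : F c = P - a ^ 2 := rfl
    have hGc : G c = Q - b ^ 2 := rfl
    -- additivity identities
    have key1 : (c - A) * a + (B - c) * b = (B - A) * (avg φ A B) := by
      obtain ⟨j1, _⟩ := hsubint A c le_rfl hAc.le hcB.le
      obtain ⟨j2, _⟩ := hsubint c B hAc.le hcB.le le_rfl
      have hadd := intervalIntegral.integral_add_adjacent_intervals j1 j2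
      have hcA : c - A ≠ 0 := sub_ne_zero.mpr hAc.ne'
      have hBc : B - c ≠ 0 := sub_ne_zero.mpr hcB.ne'
      have e1 : (c - A) * a = ∫ t in A..c, φ t := by
        rw [hadef, avg]; field_simp
      have e2 : (B - c) * b = ∫ t in c..B, φ t := by
        rw [hbdef, avg]; field_simp
      have e3 : (B - A) * (avg φ A B) = ∫ t in A..B, φ t := by
        rw [avg]; field_simp
      rw [e1, e2, e3, hadd]
    have key2 : (c - A) * P + (B - c) * Q = (B - A) * (avg (fun t => (φ t) ^ 2) A B) := by
      obtain ⟨_, j1⟩ := hsubint A c le_rfl hAc.le hcB.le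
      obtain ⟨_, j2⟩ := hsubint c B hAc.le hcB.le le_rfl
      have hadd := intervalIntegral.integral_add_adjacent_intervals j1 j2
      have hcA : c - A ≠ 0 := sub_ne_zero.mpr hAc.ne'
      have hBc : B - c ≠ 0 := sub_ne_zero.mpr hcB.ne'
      have e1 : (c - A) * P = ∫ t in A..c, (φ t) ^ 2 := by
        rw [hPdef, avg]; field_simp
      have e2 : (B - c) * Q = ∫ t in c..B, (φ t) ^ 2 := by
        rw [hQdef, avg]; field_simp
      have e3 : (B - A) * (avg (fun t => (φ t) ^ 2) A B) = ∫ t in A..B, (φ t) ^ 2 := by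
        rw [avg]; field_simp
      rw [e1, e2, e3, hadd]
    have hMm : avg (fun t => (φ t) ^ 2) A B - (avg φ A B) ^ 2 ≤ ε ^ 2 :=
      hosc A B le_rfl hAB le_rfl
    -- variance decomposition
    have hid : (B - A) * (c - A) * (P - a ^ 2) + (B - A) * (B - c) * (Q - b ^ 2)
        + (c - A) * (B - c) * (b - a) ^ 2
        = (B - A) ^ 2 * (avg (fun t => (φ t) ^ 2) A B - (avg φ A B) ^ 2) := by
      linear_combination (B - A) * key2 - ((c - A) * a + (B - c) * b + (B - A) * (avg φ A B)) * key1
    have hvar : (B - A) * (c - A) * (P - a ^ 2) + (B - A) * (B - c) * (Q - b ^ 2)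
        + (c - A) * (B - c) * (b - a) ^ 2 ≤ (B - A) ^ 2 * ε ^ 2 := by
      rw [hid]
      exact mul_le_mul_of_nonneg_left hMm (sq_nonneg _)
    -- second identity data
    have hFc' : P - a ^ 2 = ε₁ ^ 2 - (p c) ^ 2 := by rw [hp2, hFc]; ring
    have hdm0' : 0 ≤ P - a ^ 2 := by rw [← hFc]; exact hdm0
    have hdp0' : 0 ≤ Q - b ^ 2 := by rw [← hGc]; exact hdp0
    have hGc' : Q - b ^ 2 = ε₁ ^ 2 - (q c) ^ 2 := by rw [hq2, hGc]; ring
    have hgsq : (g c) ^ 2 ≤ ((B - A) * δ) ^ 2 := sq_le_sq' hg1 hg2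
    have hgc2 : ((c - A) * p c - (B - c) * q c) ^ 2 ≤ ((c - A) + (B - c)) ^ 2 * (ε₁ ^ 2 - ε ^ 2) := by
      calc ((c - A) * p c - (B - c) * q c) ^ 2 = (g c) ^ 2 := rfl
        _ ≤ ((B - A) * δ) ^ 2 := hgsq
        _ = ((c - A) + (B - c)) ^ 2 * δ ^ 2 := by ring
        _ = ((c - A) + (B - c)) ^ 2 * (ε₁ ^ 2 - ε ^ 2) := by rw [hδsq]
    have hvar2 : ((c - A) + (B - c)) * (c - A) * (ε₁ ^ 2 - (p c) ^ 2)
        + ((c - A) + (B - c)) * (B - c) * (ε₁ ^ 2 - (q c) ^ 2)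
        + (c - A) * (B - c) * (b - a) ^ 2 ≤ ((c - A) + (B - c)) ^ 2 * ε ^ 2 := by
      rw [show (c - A) + (B - c) = B - A by ring, ← hFc', ← hGc']
      exact hvar
    have hba : (b - a) ^ 2 ≤ (p c + q c) ^ 2 :=
      chord_bound (by linarith) (by linarith) hvar2 hgc2
    -- segment containment
    intro x hx
    rw [segment_eq_image ℝ] at hx
    obtain ⟨t, ⟨ht0, ht1⟩, rfl⟩ := hx
    obtain ⟨o1, o2⟩ := point_in_omega ht0 ht1 hdm0' hdp0' hFc' hGc' hba
    constructor
    · show ((1 - t) • ((a : ℝ), P) + t • ((b : ℝ), Q)).1 ^ 2 ≤ ((1 - t) • ((a : ℝ), P) + t • ((b : ℝ), Q)).2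
      simpa using o1
    · show ((1 - t) • ((a : ℝ), P) + t • ((b : ℝ), Q)).2 ≤ ((1 - t) • ((a : ℝ), P) + t • ((b : ℝ), Q)).1 ^ 2 + ε₁ ^ 2
      simpa using o2
  · -- ratio bound
    rw [le_div_iff₀ hL]
    have e1 : r * (B - A) ≤ c - A := by rw [hcmdef] at hccm; linarith
    have e2 : r * (B - A) ≤ B - c := by rw [hcpdef] at hccp; linarith
    exact le_min e1 e2
end

section
/- Let J be a nondegenerate bounded interval, let ψ be such that ψ and ψ² are integrable on J, let m ∈ ℝ, and define the cut-off ψ_m(s) = min(ψ(s), m). Then ⟨ψ_m²⟩_J − (⟨ψ_m⟩_J)² ≤ ⟨ψ²⟩_J − (⟨ψ⟩_J)². Consequently, if ψ ∈ BMO_ε(I) for a nondegenerate bounded interval I and ε ≥ 0, then ψ_m ∈ BMO_ε(I). -/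
open MeasureTheory Real

lemma sq_expand (f : ℝ → ℝ) (c : ℝ) :
    (fun t => (f t - c) ^ 2) = fun t => f t ^ 2 - 2 * c * f t + c ^ 2 := by
  funext t; ring

lemma shift_int {a b : ℝ} {f : ℝ → ℝ} (h1 : IntervalIntegrable f volume a b)
    (h2 : IntervalIntegrable (fun t => f t ^ 2) volume a b) (c : ℝ) :
    IntervalIntegrable (fun t => (f t - c) ^ 2) volume a b := by
  rw [sq_expand]
  exact (h2.sub (h1.const_mul (2 * c))).add intervalIntegrable_const

lemma avg_shift {a b : ℝ} (hab : a < b) {f : ℝ → ℝ}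
    (h1 : IntervalIntegrable f volume a b)
    (h2 : IntervalIntegrable (fun t => f t ^ 2) volume a b) (c : ℝ) :
    avg (fun t => (f t - c) ^ 2) a b
      = avg (fun t => f t ^ 2) a b - 2 * c * avg f a b + c ^ 2 := by
  have hba : (b - a) ≠ 0 := sub_ne_zero.mpr hab.ne'
  unfold avg
  rw [sq_expand]
  rw [intervalIntegral.integral_add (h2.sub (h1.const_mul (2 * c))) intervalIntegrable_const,
    intervalIntegral.integral_sub h2 (h1.const_mul (2 * c)),
    intervalIntegral.integral_const_mul, intervalIntegral.integral_const]
  field_simp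
  ring

-- variance equals avg of (f - mean)^2, and is ≤ avg of (f - c)^2
lemma var_eq {a b : ℝ} (hab : a < b) {f : ℝ → ℝ}
    (h1 : IntervalIntegrable f volume a b)
    (h2 : IntervalIntegrable (fun t => f t ^ 2) volume a b) :
    avg (fun t => f t ^ 2) a b - (avg f a b) ^ 2
      = avg (fun t => (f t - avg f a b) ^ 2) a b := by
  rw [avg_shift hab h1 h2]; ring

lemma var_le {a b : ℝ} (hab : a < b) {f : ℝ → ℝ}
    (h1 : IntervalIntegrable f volume a b)
    (h2 : IntervalIntegrable (fun t => f t ^ 2) volume a b) (c : ℝ) :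
    avg (fun t => f t ^ 2) a b - (avg f a b) ^ 2
      ≤ avg (fun t => (f t - c) ^ 2) a b := by
  rw [avg_shift hab h1 h2]; nlinarith [sq_nonneg (avg f a b - c)]

lemma min_int {a b m : ℝ} {f : ℝ → ℝ} (h1 : IntervalIntegrable f volume a b) :
    IntervalIntegrable (fun t => min (f t) m) volume a b := by
  have hm : AEStronglyMeasurable (fun t => min (f t) m)
      (volume.restrict (Set.uIoc a b)) := by
    have := (intervalIntegrable_iff.mp h1).aestronglyMeasurable
    exact this.inf aestronglyMeasurable_const
  apply IntervalIntegrable.mono_fun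
    (h1.abs.add (intervalIntegrable_const : IntervalIntegrable (fun _ => |m|) volume a b)) hm
  filter_upwards with x
  simp only [Real.norm_eq_abs]
  rw [abs_of_nonneg (by positivity : (0:ℝ) ≤ |f x| + |m|), abs_le]
  constructor
  · exact le_min (by linarith [neg_abs_le (f x), abs_nonneg m])
      (by linarith [neg_abs_le m, abs_nonneg (f x)])
  · exact min_le_of_left_le (by linarith [le_abs_self (f x), abs_nonneg m])

lemma min_sq_int {a b m : ℝ} {f : ℝ → ℝ} (h1 : IntervalIntegrable f volume a b)
    (h2 : IntervalIntegrable (fun t => f t ^ 2) volume a b) :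
    IntervalIntegrable (fun t => (min (f t) m) ^ 2) volume a b := by
  have hm : AEStronglyMeasurable (fun t => (min (f t) m) ^ 2)
      (volume.restrict (Set.uIoc a b)) := by
    have := (intervalIntegrable_iff.mp h1).aestronglyMeasurable
    exact (this.inf aestronglyMeasurable_const).pow 2
  apply IntervalIntegrable.mono_fun
    (h2.add (intervalIntegrable_const : IntervalIntegrable (fun _ => m ^ 2) volume a b)) hm
  filter_upwards with x
  simp only [Real.norm_eq_abs]
  rw [abs_of_nonneg (by positivity : (0:ℝ) ≤ f x ^ 2 + m ^ 2),
    abs_of_nonneg (sq_nonneg _)]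
  rcases le_total (f x) m with h | h
  · rw [min_eq_left h]; nlinarith [sq_nonneg m]
  · rw [min_eq_right h]; nlinarith [sq_nonneg (f x)]

lemma min_lip (x y m : ℝ) : (min x m - min y m) ^ 2 ≤ (x - y) ^ 2 := by
  rcases le_total x m with hx | hx <;> rcases le_total y m with hy | hy <;>
    simp [min_eq_left, min_eq_right, hx, hy] <;> nlinarith

/-- Cut-offs decrease mean oscillation: `ψ_m = min(ψ, m)` has smaller variance
over any interval, and consequently cut-offs preserve membership in `BMO_ε`. -/
theorem stmt12 (m : ℝ) :
    (∀ a b : ℝ, a < b → ∀ ψ : ℝ → ℝ,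
      IntervalIntegrable ψ volume a b →
      IntervalIntegrable (fun t => (ψ t) ^ 2) volume a b →
      avg (fun t => (min (ψ t) m) ^ 2) a b - (avg (fun t => min (ψ t) m) a b) ^ 2 ≤
        avg (fun t => (ψ t) ^ 2) a b - (avg ψ a b) ^ 2) ∧
    (∀ ε : ℝ, 0 ≤ ε → ∀ A B : ℝ, A < B → ∀ ψ : ℝ → ℝ,
      BMOe ε A B ψ → BMOe ε A B (fun s => min (ψ s) m)) := by
  have main : ∀ a b : ℝ, a < b → ∀ ψ : ℝ → ℝ,
      IntervalIntegrable ψ volume a b →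
      IntervalIntegrable (fun t => (ψ t) ^ 2) volume a b →
      avg (fun t => (min (ψ t) m) ^ 2) a b - (avg (fun t => min (ψ t) m) a b) ^ 2 ≤
        avg (fun t => (ψ t) ^ 2) a b - (avg ψ a b) ^ 2 := by
    intro a b hab ψ h1 h2
    set μ := avg ψ a b with hμ
    have hm1 := min_int (m := m) h1
    have hm2 := min_sq_int (m := m) h1 h2
    have step1 := var_le hab hm1 hm2 (min μ m)
    have step3 := var_eq hab h1 h2
    refine step1.trans (le_of_le_of_eq ?_ step3.symm)
    -- avg ((min ψ m - min μ m)^2) ≤ avg ((ψ - μ)^2)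
    have hba : (0:ℝ) < b - a := by linarith
    unfold avg
    have hle : (∫ t in a..b, (min (ψ t) m - min μ m) ^ 2)
        ≤ ∫ t in a..b, (ψ t - μ) ^ 2 :=
      intervalIntegral.integral_mono_on hab.le (shift_int hm1 hm2 _)
        (shift_int h1 h2 _) (fun x _ => min_lip _ _ _)
    exact div_le_div_of_nonneg_right hle hba.le
  refine ⟨main, ?_⟩
  rintro ε hε A B hAB ψ ⟨h1, h2, h3⟩
  refine ⟨min_int h1, min_sq_int h1 h2, ?_⟩
  intro c d hc hcd hd
  have hsub : Set.uIcc c d ⊆ Set.uIcc A B := by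
    rw [Set.uIcc_of_le hcd.le, Set.uIcc_of_le hAB.le]
    exact Set.Icc_subset_Icc hc hd
  exact (main c d hcd ψ (h1.mono_set hsub) (h2.mono_set hsub)).trans (h3 c d hc hcd hd)
end

section
/- Let δ > 0 and 0 ≤ ε ≤ (2√2/3)·δ. If x⁻, x⁺ ∈ Ω_ε and the midpoint (x⁻ + x⁺)/2 ∈ Ω_ε, then the entire straight-line segment with endpoints x⁻ and x⁺ lies in Ω_δ. -/
open MeasureTheory Real
lemma key13 (E D u v s t : ℝ) (hu0 : 0 ≤ u) (huE : u ≤ E) (hv0 : 0 ≤ v) (hvE : v ≤ E)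
    (hmid : u + v + s/2 ≤ 2*E) (ht0 : 0 ≤ t) (ht1 : t ≤ 1)
    (hED : 9*E ≤ 8*D) : (1-t)*u + t*v + t*(1-t)*s ≤ D := by
  have h1 : t*(1-t)*s ≤ t*(1-t)*(4*E-2*u-2*v) := by
    apply mul_le_mul_of_nonneg_left (by linarith) (by nlinarith)
  rcases le_total t (1/2) with h | h
  · nlinarith [sq_nonneg (t - 1/4), mul_nonneg (mul_nonneg (sub_nonneg.2 huE) (by linarith : (0:ℝ) ≤ 1-t)) (by linarith : (0:ℝ) ≤ 1-2*t), mul_nonneg (mul_nonneg hv0 ht0) (by linarith : (0:ℝ) ≤ 1-2*t)]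
  · nlinarith [sq_nonneg (t - 3/4), mul_nonneg (mul_nonneg (sub_nonneg.2 hvE) ht0) (by linarith : (0:ℝ) ≤ 2*t-1), mul_nonneg (mul_nonneg hu0 (by linarith : (0:ℝ) ≤ 1-t)) (by linarith : (0:ℝ) ≤ 2*t-1)]

/-- If `ε ≤ (2√2/3)·δ` and a segment has both endpoints and its midpoint in
`Ω_ε`, then the whole segment lies in `Ω_δ`. -/
theorem stmt13 (δ ε : ℝ) (hδ : 0 < δ) (hε0 : 0 ≤ ε)
    (hε : ε ≤ (2 * Real.sqrt 2 / 3) * δ)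
    (xm xp : ℝ × ℝ) (hm : xm ∈ Omega ε) (hp : xp ∈ Omega ε)
    (hmid : (1 / 2 : ℝ) • (xm + xp) ∈ Omega ε) :
    segment ℝ xm xp ⊆ Omega δ := by
  -- from hε : ε^2 ≤ 8/9 δ^2
  have hE : ε^2 ≤ 8/9 * δ^2 := by
    have h2 : Real.sqrt 2 ^ 2 = 2 := Real.sq_sqrt (by norm_num)
    have := mul_self_le_mul_self hε0 hε
    nlinarith
  intro x hx
  rw [segment_eq_image] at hx
  obtain ⟨t, ⟨ht0, ht1⟩, rfl⟩ := hx
  obtain ⟨hm1, hm2⟩ := hm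
  obtain ⟨hp1, hp2⟩ := hp
  obtain ⟨_, hmid2⟩ := hmid
  simp only [Omega, Set.mem_setOf_eq, Prod.smul_fst, Prod.smul_snd, Prod.fst_add,
    Prod.snd_add, smul_eq_mul] at hmid2 ⊢
  set a := xm.1; set b := xp.1
  constructor
  · nlinarith [mul_nonneg (mul_nonneg ht0 (by linarith : (0:ℝ) ≤ 1-t)) (sq_nonneg (a-b))]
  · -- upper bound
    have hkey := key13 (ε^2) (δ^2) (xm.2 - a^2) (xp.2 - b^2) ((a-b)^2) t
      (by linarith) (by linarith) (by linarith) (by linarith)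
      (by nlinarith) ht0 ht1 (by linarith)
    nlinarith [hkey]
end
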